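/- arXiv:2205.08700 — 2 statements merged into one kernel-verified Lean document; each statement's English description precedes it below -/
import Mathlib

section
/- Let A, B, C ∈ 𝔰𝔩(4,ℝ) be pairwise-commuting. The map ∇ defined by the Koszul formula satisfies: (i) ∇_X Y = 0 for X, Y ∈ 𝔞; (ii) ∇_X Y = A(M_X) Y for X ∈ 𝔞, Y ∈ 𝔫, where for X = λ₁e₁ + λ₂e₂ + λ₇e₇ one sets M_X := λ₁B + λ₂C + λ₇A; (iii) ∇_X Y = −S(M_Y) X for X ∈ 𝔫, Y ∈ 𝔞; (iv) ∇_X Y = ⟨S(B)X, Y⟩ e₁ + ⟨S(C)X, Y⟩ e₂ + ⟨S(A)X, Y⟩ e₇ for X, Y ∈ 𝔫. Here S(M) := (M + Mᵀ)/2 and A(M) := (M − Mᵀ)/2. -/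
open Matrix

noncomputable section

/-- Standard basis vector `e_{i+1}` of `ℝ⁷` (index `0 ↔ e₁`, …, `6 ↔ e₇`). -/
def E (i : Fin 7) : Fin 7 → ℝ := Pi.single i 1

/-- The standard inner product on `ℝ⁷` for which `e₁, …, e₇` is orthonormal. -/
def inner7 (X Y : Fin 7 → ℝ) : ℝ := ∑ i, X i * Y i

/-- The component of `X ∈ ℝ⁷` in `𝔫 = span{e₃,e₄,e₅,e₆} ≅ ℝ⁴`. -/
def nPart (X : Fin 7 → ℝ) : Fin 4 → ℝ := fun i => X ⟨i.val + 2, by omega⟩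

/-- The inclusion `ℝ⁴ ≅ 𝔫 = span{e₃,e₄,e₅,e₆} ⊆ ℝ⁷`. -/
def emb (w : Fin 4 → ℝ) : Fin 7 → ℝ :=
  fun j => if h : 2 ≤ j.val ∧ j.val ≤ 5 then w ⟨j.val - 2, by omega⟩ else 0

/-- For `X = λ₁e₁ + λ₂e₂ + λ₇e₇ (+ 𝔫-part)`, the matrix `M_X = λ₁B + λ₂C + λ₇A`. -/
def MX (A B C : Matrix (Fin 4) (Fin 4) ℝ) (X : Fin 7 → ℝ) : Matrix (Fin 4) (Fin 4) ℝ :=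
  X 0 • B + X 1 • C + X 6 • A

/-- The bilinear antisymmetric bracket on `ℝ⁷` determined by `[𝔞,𝔞] = 0`, `[𝔫,𝔫] = 0`,
`[e₇,v] = Av`, `[e₁,v] = Bv`, `[e₂,v] = Cv` for `v ∈ 𝔫` and `[v,eₖ] = −[eₖ,v]`,
where `𝔞 = span{e₁,e₂,e₇}` and `𝔫 = span{e₃,e₄,e₅,e₆}`. -/
def bracket (A B C : Matrix (Fin 4) (Fin 4) ℝ) (X Y : Fin 7 → ℝ) : Fin 7 → ℝ :=
  emb ((MX A B C X).mulVec (nPart Y) - (MX A B C Y).mulVec (nPart X))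

/-- The symmetric part `S(M) = (M + Mᵀ)/2` of a matrix. -/
def symPart (M : Matrix (Fin 4) (Fin 4) ℝ) : Matrix (Fin 4) (Fin 4) ℝ :=
  (1/2 : ℝ) • (M + Mᵀ)

/-- The antisymmetric part `A(M) = (M − Mᵀ)/2` of a matrix. -/
def skewPart (M : Matrix (Fin 4) (Fin 4) ℝ) : Matrix (Fin 4) (Fin 4) ℝ :=
  (1/2 : ℝ) • (M - Mᵀ)

/-- `𝔞 = span{e₁,e₂,e₇} ⊆ ℝ⁷`. -/
def aSub : Submodule ℝ (Fin 7 → ℝ) := Submodule.span ℝ {E 0, E 1, E 6}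

/-- `𝔫 = span{e₃,e₄,e₅,e₆} ⊆ ℝ⁷`. -/
def nSub : Submodule ℝ (Fin 7 → ℝ) := Submodule.span ℝ {E 2, E 3, E 4, E 5}

/-- `∇` satisfies the Koszul formula
`⟨∇_X Y, Z⟩ = ½(⟨[X,Y],Z⟩ − ⟨[Y,Z],X⟩ + ⟨[Z,X],Y⟩)`. -/
def IsKoszul (A B C : Matrix (Fin 4) (Fin 4) ℝ)
    (nabla : (Fin 7 → ℝ) → (Fin 7 → ℝ) → (Fin 7 → ℝ)) : Prop :=
  ∀ X Y Z, inner7 (nabla X Y) Z =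
    (1/2 : ℝ) * (inner7 (bracket A B C X Y) Z - inner7 (bracket A B C Y Z) X
      + inner7 (bracket A B C Z X) Y)

/-- The wedge `e^{(i+1)(j+1)(k+1)}` of dual basis elements of `(ℝ⁷)*`, as a 3-form. -/
def w3 (i j k : Fin 7) (X Y Z : Fin 7 → ℝ) : ℝ :=
  Matrix.det !![X i, X j, X k; Y i, Y j, Y k; Z i, Z j, Z k]

/-- The wedge `e^{(i+1)(j+1)(k+1)(l+1)}` of dual basis elements of `(ℝ⁷)*`, as a 4-form. -/
def w4 (i j k l : Fin 7) (X Y Z W : Fin 7 → ℝ) : ℝ :=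
  Matrix.det !![X i, X j, X k, X l; Y i, Y j, Y k, Y l; Z i, Z j, Z k, Z l;
    W i, W j, W k, W l]

/-- The `G₂`-structure 3-form `φ = e¹²⁷ + e³⁴⁷ + e⁵⁶⁷ + e¹³⁵ − e¹⁴⁶ − e²³⁶ − e²⁴⁵`. -/
def phi (X Y Z : Fin 7 → ℝ) : ℝ :=
  w3 0 1 6 X Y Z + w3 2 3 6 X Y Z + w3 4 5 6 X Y Z + w3 0 2 4 X Y Z
    - w3 0 3 5 X Y Z - w3 1 2 5 X Y Z - w3 1 3 4 X Y Z

/-- The dual 4-form `ψ = e³⁴⁵⁶ + e¹²⁵⁶ + e¹²³⁴ − e²⁴⁶⁷ + e²³⁵⁷ + e¹⁴⁵⁷ + e¹³⁶⁷`. -/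
def psi (X Y Z W : Fin 7 → ℝ) : ℝ :=
  w4 2 3 4 5 X Y Z W + w4 0 1 4 5 X Y Z W + w4 0 1 2 3 X Y Z W - w4 1 3 5 6 X Y Z W
    + w4 1 2 4 6 X Y Z W + w4 0 3 4 6 X Y Z W + w4 0 2 5 6 X Y Z W

/-- `T : ℝ⁷ → ℝ⁷` is a full torsion tensor of `(𝔤_{A,B,C}, φ)`: `∇_X φ = ι_{T(X)} ψ`
for all `X`, where `(∇_X φ)(Y,Z,W) = −φ(∇_X Y,Z,W) − φ(Y,∇_X Z,W) − φ(Y,Z,∇_X W)`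
and `(ι_V ψ)(Y,Z,W) = ψ(V,Y,Z,W)`. -/
def IsFullTorsion (nabla : (Fin 7 → ℝ) → (Fin 7 → ℝ) → (Fin 7 → ℝ))
    (T : (Fin 7 → ℝ) → (Fin 7 → ℝ)) : Prop :=
  ∀ X Y Z W, -phi (nabla X Y) Z W - phi Y (nabla X Z) W - phi Y Z (nabla X W)
    = psi (T X) Y Z W

/-- `T(X,Y) := ⟨T(X),Y⟩`. -/
def Tbil (T : (Fin 7 → ℝ) → (Fin 7 → ℝ)) (X Y : Fin 7 → ℝ) : ℝ := inner7 (T X) Y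

/-- The divergence of `T`, determined by
`⟨div T, e_j⟩ = −∑ᵢ T(∇_{e_i}e_i, e_j) − ∑ᵢ T(e_i, ∇_{e_i}e_j)`. -/
def divT (nabla : (Fin 7 → ℝ) → (Fin 7 → ℝ) → (Fin 7 → ℝ))
    (T : (Fin 7 → ℝ) → (Fin 7 → ℝ)) : Fin 7 → ℝ :=
  fun j => -∑ i, Tbil T (nabla (E i) (E i)) (E j) - ∑ i, Tbil T (E i) (nabla (E i) (E j))

end


section Aux
open Matrix

variable {w : Fin 4 → ℝ} {Z : Fin 7 → ℝ}
lemma emb0 : emb w 0 = 0 := rfl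
lemma emb1 : emb w 1 = 0 := rfl
lemma emb2 : emb w 2 = w 0 := rfl
lemma emb3 : emb w 3 = w 1 := rfl
lemma emb4 : emb w 4 = w 2 := rfl
lemma emb5 : emb w 5 = w 3 := rfl
lemma emb6 : emb w 6 = 0 := rfl
lemma nP0 : nPart Z 0 = Z 2 := rfl
lemma nP1 : nPart Z 1 = Z 3 := rfl
lemma nP2 : nPart Z 2 = Z 4 := rfl
lemma nP3 : nPart Z 3 = Z 5 := rfl

lemma emb_zero : emb (0 : Fin 4 → ℝ) = 0 := by
  funext j; simp [emb]

lemma nPartE0 : nPart (E 0) = 0 := by funext i; fin_cases i <;> rfl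
lemma nPartE1 : nPart (E 1) = 0 := by funext i; fin_cases i <;> rfl
lemma nPartE6 : nPart (E 6) = 0 := by funext i; fin_cases i <;> rfl
lemma nPartE2 : nPart (E 2) = Pi.single 0 1 := by funext i; fin_cases i <;> rfl
lemma nPartE3 : nPart (E 3) = Pi.single 1 1 := by funext i; fin_cases i <;> rfl
lemma nPartE4 : nPart (E 4) = Pi.single 2 1 := by funext i; fin_cases i <;> rfl
lemma nPartE5 : nPart (E 5) = Pi.single 3 1 := by funext i; fin_cases i <;> rfl

lemma inner7_E (v : Fin 7 → ℝ) (j : Fin 7) : inner7 v (E j) = v j := by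
  simp [inner7, E, Pi.single_apply, mul_ite]

lemma inner7_emb (w : Fin 4 → ℝ) (Z : Fin 7 → ℝ) : inner7 (emb w) Z = w ⬝ᵥ nPart Z := by
  simp [inner7, dotProduct, Fin.sum_univ_seven, Fin.sum_univ_four,
    emb0, emb1, emb2, emb3, emb4, emb5, emb6, nP0, nP1, nP2, nP3]

lemma aSub_coord {X : Fin 7 → ℝ} (hX : X ∈ aSub) {j : Fin 7}
    (hj : 2 ≤ j.val ∧ j.val ≤ 5) : X j = 0 := by
  have h : aSub ≤ LinearMap.ker (LinearMap.proj j : (Fin 7 → ℝ) →ₗ[ℝ] ℝ) := by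
    rw [aSub, Submodule.span_le]
    intro v hv
    simp only [Set.mem_insert_iff, Set.mem_singleton_iff] at hv
    rcases hv with h|h|h <;> subst h <;>
      simp only [SetLike.mem_coe, LinearMap.mem_ker, LinearMap.proj_apply, E, Pi.single_apply, Fin.ext_iff] <;> split_ifs <;> first | rfl | omega
  exact h hX

lemma nSub_coord {X : Fin 7 → ℝ} (hX : X ∈ nSub) {j : Fin 7}
    (hj : j.val ≤ 1 ∨ j.val = 6) : X j = 0 := by
  have h : nSub ≤ LinearMap.ker (LinearMap.proj j : (Fin 7 → ℝ) →ₗ[ℝ] ℝ) := by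
    rw [nSub, Submodule.span_le]
    intro v hv
    simp only [Set.mem_insert_iff, Set.mem_singleton_iff] at hv
    rcases hv with h|h|h|h <;> subst h <;>
      simp [LinearMap.mem_ker, E, Pi.single_apply, Fin.ext_iff] <;> omega
  exact h hX

lemma nPart_aSub {X : Fin 7 → ℝ} (hX : X ∈ aSub) : nPart X = 0 := by
  funext i
  exact aSub_coord hX (by constructor <;> simp <;> omega)

lemma MX_nSub (A B C : Matrix (Fin 4) (Fin 4) ℝ) {Y : Fin 7 → ℝ} (hY : Y ∈ nSub) :
    MX A B C Y = 0 := by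
  have h0 : Y 0 = 0 := nSub_coord hY (by left; simp)
  have h1 : Y 1 = 0 := nSub_coord hY (by left; simp)
  have h6 : Y 6 = 0 := nSub_coord hY (by right; rfl)
  simp [MX, h0, h1, h6]

end Aux

set_option maxHeartbeats 3000000 in
/-- explicit formulas for the Levi-Civita connection `∇` of
`(𝔤_{A,B,C}, ⟨·,·⟩)` defined by the Koszul formula. -/
theorem leviCivita_formulas (A B C : Matrix (Fin 4) (Fin 4) ℝ)
    (hAB : A * B = B * A) (hAC : A * C = C * A) (hBC : B * C = C * B)
    (htA : Matrix.trace A = 0) (htB : Matrix.trace B = 0) (htC : Matrix.trace C = 0)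
    (nabla : (Fin 7 → ℝ) → (Fin 7 → ℝ) → (Fin 7 → ℝ))
    (hK : IsKoszul A B C nabla) :
    (∀ X ∈ aSub, ∀ Y ∈ aSub, nabla X Y = 0) ∧
    (∀ X ∈ aSub, ∀ Y ∈ nSub,
      nabla X Y = emb ((skewPart (MX A B C X)).mulVec (nPart Y))) ∧
    (∀ X ∈ nSub, ∀ Y ∈ aSub,
      nabla X Y = -emb ((symPart (MX A B C Y)).mulVec (nPart X))) ∧
    (∀ X ∈ nSub, ∀ Y ∈ nSub,
      nabla X Y = (((symPart B).mulVec (nPart X)) ⬝ᵥ (nPart Y)) • E 0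
        + (((symPart C).mulVec (nPart X)) ⬝ᵥ (nPart Y)) • E 1
        + (((symPart A).mulVec (nPart X)) ⬝ᵥ (nPart Y)) • E 6) := by
  have hnab : ∀ X Y (j : Fin 7), nabla X Y j =
      (1/2 : ℝ) * (emb ((MX A B C X).mulVec (nPart Y) - (MX A B C Y).mulVec (nPart X)) j
        - ((MX A B C Y).mulVec (nPart (E j)) - (MX A B C (E j)).mulVec (nPart Y)) ⬝ᵥ nPart X
        + ((MX A B C (E j)).mulVec (nPart X) - (MX A B C X).mulVec (nPart (E j))) ⬝ᵥ nPart Y) := by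
    intro X Y j
    have h := hK X Y (E j)
    rw [inner7_E] at h
    rw [h]
    simp only [bracket, inner7_emb, inner7_E]
  refine ⟨?_, ?_, ?_, ?_⟩
  · intro X hX Y hY
    funext j
    rw [hnab, nPart_aSub hX, nPart_aSub hY]
    simp [Matrix.mulVec_zero, emb_zero]
  · intro X hX Y hY
    funext j
    rw [hnab, nPart_aSub hX, MX_nSub A B C hY]
    simp only [Matrix.mulVec_zero, Matrix.zero_mulVec, sub_zero, zero_sub,
      dotProduct_zero, zero_dotProduct, neg_dotProduct, zero_add]
    fin_cases j <;>
      simp (config := { decide := true }) [emb0, emb1, emb2, emb3, emb4, emb5, emb6,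
        nPartE0, nPartE1, nPartE2, nPartE3, nPartE4, nPartE5, nPartE6,
        nP0, nP1, nP2, nP3, skewPart, MX, Matrix.mulVec, dotProduct,
        Fin.sum_univ_four, E, Pi.single_apply] <;> ring
  · intro X hX Y hY
    funext j
    rw [hnab, nPart_aSub hY, MX_nSub A B C hX]
    simp only [Matrix.mulVec_zero, Matrix.zero_mulVec, sub_zero, zero_sub,
      dotProduct_zero, zero_dotProduct, neg_dotProduct, zero_add,
      Pi.neg_apply]
    fin_cases j <;>
      simp (config := { decide := true }) [emb0, emb1, emb2, emb3, emb4, emb5, emb6,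
        nPartE0, nPartE1, nPartE2, nPartE3, nPartE4, nPartE5, nPartE6,
        nP0, nP1, nP2, nP3, symPart, MX, Matrix.mulVec, dotProduct,
        Fin.sum_univ_four, E, Pi.single_apply] <;> ring
  · intro X hX Y hY
    funext j
    rw [hnab, MX_nSub A B C hX, MX_nSub A B C hY]
    simp only [Matrix.mulVec_zero, Matrix.zero_mulVec, sub_zero, zero_sub,
      dotProduct_zero, zero_dotProduct, neg_dotProduct,
      neg_neg, zero_add, sub_self]
    fin_cases j <;>
      simp (config := { decide := true }) [emb0, emb1, emb2, emb3, emb4, emb5, emb6,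
        nPartE0, nPartE1, nPartE2, nPartE3, nPartE4, nPartE5, nPartE6,
        nP0, nP1, nP2, nP3, symPart, MX, Matrix.mulVec, dotProduct,
        Fin.sum_univ_four, E, Pi.single_apply] <;> ring
end

section
/- Let A, B, C ∈ 𝔰𝔩(4,ℝ) be skew-symmetric (hence pairwise-commuting is the only extra hypothesis: assume AB=BA, AC=CA, BC=CB). Then every full torsion tensor of (𝔤_{A,B,C}, φ), i.e., every linear map T : ℝ⁷ → ℝ⁷ with ∇_X φ = ι_{T(X)}ψ for all X, has divergence zero: div T = 0. -/
open Matrix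

theorem aux_det3 (a b c d e f g h i : ℝ) :
    Matrix.det !![a,b,c; d,e,f; g,h,i] =
      a*(e*i - f*h) - b*(d*i - f*g) + c*(d*h - e*g) := by
  simp [Matrix.det_fin_three]; ring

theorem aux_det4 (a b c d e f g h i j k l m n o p : ℝ) :
    Matrix.det !![a,b,c,d; e,f,g,h; i,j,k,l; m,n,o,p] =
      a*(f*(k*p-l*o) - g*(j*p-l*n) + h*(j*o-k*n))
      - b*(e*(k*p-l*o) - g*(i*p-l*m) + h*(i*o-k*m))
      + c*(e*(j*p-l*n) - f*(i*p-l*m) + h*(i*n-j*m))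
      - d*(e*(j*o-k*n) - f*(i*o-k*m) + g*(i*n-j*m)) := by
  simp [Matrix.det_succ_row_zero, Fin.sum_univ_succ, Fin.succAbove]
  ring

@[simp] theorem aux_ite_app (c : Prop) [Decidable c] (M N : Matrix (Fin 4) (Fin 4) ℝ)
    (i j : Fin 4) : (if c then M else N) i j = if c then M i j else N i j := by
  split <;> rfl

@[simp] theorem aux_v7_0 : ((0 : Fin 7) : ℕ) = 0 := rfl
@[simp] theorem aux_v7_1 : ((1 : Fin 7) : ℕ) = 1 := rfl
@[simp] theorem aux_v7_2 : ((2 : Fin 7) : ℕ) = 2 := rfl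
@[simp] theorem aux_v7_3 : ((3 : Fin 7) : ℕ) = 3 := rfl
@[simp] theorem aux_v7_4 : ((4 : Fin 7) : ℕ) = 4 := rfl
@[simp] theorem aux_v7_5 : ((5 : Fin 7) : ℕ) = 5 := rfl
@[simp] theorem aux_v7_6 : ((6 : Fin 7) : ℕ) = 6 := rfl
@[simp] theorem aux_v4_0 : ((0 : Fin 4) : ℕ) = 0 := rfl
@[simp] theorem aux_v4_1 : ((1 : Fin 4) : ℕ) = 1 := rfl
@[simp] theorem aux_v4_2 : ((2 : Fin 4) : ℕ) = 2 := rfl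
@[simp] theorem aux_v4_3 : ((3 : Fin 4) : ℕ) = 3 := rfl
@[simp] theorem aux_m7_2 (h : 2 < 7) : (⟨2,h⟩ : Fin 7) = 2 := rfl
@[simp] theorem aux_m7_3 (h : 3 < 7) : (⟨3,h⟩ : Fin 7) = 3 := rfl
@[simp] theorem aux_m7_4 (h : 4 < 7) : (⟨4,h⟩ : Fin 7) = 4 := rfl
@[simp] theorem aux_m7_5 (h : 5 < 7) : (⟨5,h⟩ : Fin 7) = 5 := rfl
@[simp] theorem aux_m4_0 (h : 0 < 4) : (⟨0,h⟩ : Fin 4) = 0 := rfl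
@[simp] theorem aux_m4_1 (h : 1 < 4) : (⟨1,h⟩ : Fin 4) = 1 := rfl
@[simp] theorem aux_m4_2 (h : 2 < 4) : (⟨2,h⟩ : Fin 4) = 2 := rfl
@[simp] theorem aux_m4_3 (h : 3 < 4) : (⟨3,h⟩ : Fin 4) = 3 := rfl

set_option maxHeartbeats 0

/-- for skew-symmetric pairwise-commuting A, B, C, every full torsion
tensor of `(𝔤_{A,B,C}, φ)` is divergence-free. -/
theorem divT_eq_zero_of_skewSymmetric (A B C : Matrix (Fin 4) (Fin 4) ℝ)
    (hA : Aᵀ = -A) (hB : Bᵀ = -B) (hC : Cᵀ = -C)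
    (hAB : A * B = B * A) (hAC : A * C = C * A) (hBC : B * C = C * B)
    (nabla : (Fin 7 → ℝ) → (Fin 7 → ℝ) → (Fin 7 → ℝ))
    (hK : IsKoszul A B C nabla)
    (T : (Fin 7 → ℝ) → (Fin 7 → ℝ)) (hT : IsFullTorsion nabla T) :
    divT nabla T = 0 := by
  have hA' : ∀ i j, A j i = -A i j := fun i j => by
    have h := congrFun (congrFun hA i) j
    simpa using h
  have hA0 : ∀ i, A i i = 0 := fun i => by have := hA' i i; linarith
  have hA10 : A 1 0 = -A 0 1 := hA' 0 1
  have hA20 : A 2 0 = -A 0 2 := hA' 0 2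
  have hA21 : A 2 1 = -A 1 2 := hA' 1 2
  have hA30 : A 3 0 = -A 0 3 := hA' 0 3
  have hA31 : A 3 1 = -A 1 3 := hA' 1 3
  have hA32 : A 3 2 = -A 2 3 := hA' 2 3
  have hB' : ∀ i j, B j i = -B i j := fun i j => by
    have h := congrFun (congrFun hB i) j
    simpa using h
  have hB0 : ∀ i, B i i = 0 := fun i => by have := hB' i i; linarith
  have hB10 : B 1 0 = -B 0 1 := hB' 0 1
  have hB20 : B 2 0 = -B 0 2 := hB' 0 2
  have hB21 : B 2 1 = -B 1 2 := hB' 1 2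
  have hB30 : B 3 0 = -B 0 3 := hB' 0 3
  have hB31 : B 3 1 = -B 1 3 := hB' 1 3
  have hB32 : B 3 2 = -B 2 3 := hB' 2 3
  have hC' : ∀ i j, C j i = -C i j := fun i j => by
    have h := congrFun (congrFun hC i) j
    simpa using h
  have hC0 : ∀ i, C i i = 0 := fun i => by have := hC' i i; linarith
  have hC10 : C 1 0 = -C 0 1 := hC' 0 1
  have hC20 : C 2 0 = -C 0 2 := hC' 0 2
  have hC21 : C 2 1 = -C 1 2 := hC' 1 2
  have hC30 : C 3 0 = -C 0 3 := hC' 0 3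
  have hC31 : C 3 1 = -C 1 3 := hC' 1 3
  have hC32 : C 3 2 = -C 2 3 := hC' 2 3
  have hiE : ∀ (V : Fin 7 → ℝ) (j : Fin 7), inner7 V (E j) = V j := by
    intro V j
    simp [inner7, E, Pi.single_apply, mul_ite, mul_one, mul_zero]
  have hn : ∀ X Y (j : Fin 7), nabla X Y j =
      (1/2 : ℝ) * (bracket A B C X Y j - inner7 (bracket A B C Y (E j)) X
        + inner7 (bracket A B C (E j) X) Y) := by
    intro X Y j
    have h := hK X Y (E j)
    rw [hiE, hiE] at h
    exact h
  have hnz : ∀ Y, nabla 0 Y = 0 := by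
    intro Y; funext j
    rw [hn]
    simp [bracket, MX, nPart, emb, inner7, E, Pi.single_apply, Matrix.mulVec,
      dotProduct, Matrix.add_apply, Matrix.smul_apply, smul_eq_mul,
      Fin.sum_univ_four, Fin.sum_univ_seven]
  have hbs : ∀ X (j : Fin 7), bracket A B C X X j = 0 := by
    intro X j
    simp [bracket, emb]
  have hba : ∀ X Y (j : Fin 7), bracket A B C Y X j = -bracket A B C X Y j := by
    intro X Y j
    simp only [bracket, emb, Pi.sub_apply]
    split <;> ring
  have hbr : ∀ (i j : Fin 7), bracket A B C (E i) (E j) i = 0 := by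
    intro i j
    fin_cases i <;>
      simp [bracket, MX, nPart, emb, E, Pi.single_apply, Matrix.mulVec,
        dotProduct, Matrix.add_apply, Matrix.smul_apply, smul_eq_mul,
        Fin.sum_univ_four, hA0, hB0, hC0, ite_apply, Matrix.zero_apply, ite_self]
  have hEE : ∀ i, nabla (E i) (E i) = 0 := by
    intro i; funext j
    rw [hn, hbs, hiE, hiE]
    have t0 := hbr i j
    have t1 := hba (E i) (E j) i
    simp only [Pi.zero_apply]
    rw [t1, t0]
    ring
  have hTc0 : ∀ X, T X 0 = -(phi (nabla X (E 1)) (E 4) (E 5) + phi (E 1) (nabla X (E 4)) (E 5) + phi (E 1) (E 4) (nabla X (E 5))) := by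
    intro X
    have h := hT X (E 1) (E 4) (E 5)
    have h2 : psi (T X) (E 1) (E 4) (E 5) = T X 0 := by
      simp [psi, w4, aux_det4, E, Pi.single_apply]
    linarith [h, h2]
  have hTc1 : ∀ X, T X 1 = phi (nabla X (E 0)) (E 4) (E 5) + phi (E 0) (nabla X (E 4)) (E 5) + phi (E 0) (E 4) (nabla X (E 5)) := by
    intro X
    have h := hT X (E 0) (E 4) (E 5)
    have h2 : psi (T X) (E 0) (E 4) (E 5) = -T X 1 := by
      simp [psi, w4, aux_det4, E, Pi.single_apply]
    linarith [h, h2]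
  have hTc2 : ∀ X, T X 2 = -(phi (nabla X (E 3)) (E 4) (E 5) + phi (E 3) (nabla X (E 4)) (E 5) + phi (E 3) (E 4) (nabla X (E 5))) := by
    intro X
    have h := hT X (E 3) (E 4) (E 5)
    have h2 : psi (T X) (E 3) (E 4) (E 5) = T X 2 := by
      simp [psi, w4, aux_det4, E, Pi.single_apply]
    linarith [h, h2]
  have hTc3 : ∀ X, T X 3 = phi (nabla X (E 2)) (E 4) (E 5) + phi (E 2) (nabla X (E 4)) (E 5) + phi (E 2) (E 4) (nabla X (E 5)) := by
    intro X
    have h := hT X (E 2) (E 4) (E 5)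
    have h2 : psi (T X) (E 2) (E 4) (E 5) = -T X 3 := by
      simp [psi, w4, aux_det4, E, Pi.single_apply]
    linarith [h, h2]
  have hTc4 : ∀ X, T X 4 = -(phi (nabla X (E 2)) (E 3) (E 5) + phi (E 2) (nabla X (E 3)) (E 5) + phi (E 2) (E 3) (nabla X (E 5))) := by
    intro X
    have h := hT X (E 2) (E 3) (E 5)
    have h2 : psi (T X) (E 2) (E 3) (E 5) = T X 4 := by
      simp [psi, w4, aux_det4, E, Pi.single_apply]
    linarith [h, h2]
  have hTc5 : ∀ X, T X 5 = phi (nabla X (E 2)) (E 3) (E 4) + phi (E 2) (nabla X (E 3)) (E 4) + phi (E 2) (E 3) (nabla X (E 4)) := by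
    intro X
    have h := hT X (E 2) (E 3) (E 4)
    have h2 : psi (T X) (E 2) (E 3) (E 4) = -T X 5 := by
      simp [psi, w4, aux_det4, E, Pi.single_apply]
    linarith [h, h2]
  have hTc6 : ∀ X, T X 6 = -(phi (nabla X (E 1)) (E 3) (E 5) + phi (E 1) (nabla X (E 3)) (E 5) + phi (E 1) (E 3) (nabla X (E 5))) := by
    intro X
    have h := hT X (E 1) (E 3) (E 5)
    have h2 : psi (T X) (E 1) (E 3) (E 5) = T X 6 := by
      simp [psi, w4, aux_det4, E, Pi.single_apply]
    linarith [h, h2]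
  have hT0 : T 0 = 0 := by
    funext m
    fin_cases m <;>
      simp [hTc0, hTc1, hTc2, hTc3, hTc4, hTc5, hTc6, hnz, phi, w3, aux_det3,
        E, Pi.single_apply]
  funext j
  fin_cases j <;>
  · simp only [divT, Fin.sum_univ_seven, hEE, hT0, Tbil, inner7]
    simp only [hTc0, hTc1, hTc2, hTc3, hTc4, hTc5, hTc6]
    simp [phi, w3, aux_det3, E, Pi.single_apply]
    simp only [hn]
    simp (config := { maxSteps := 10000000 }) [bracket, MX, nPart, emb, inner7, E,
      Pi.single_apply, Matrix.mulVec,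
      dotProduct, Matrix.add_apply, Matrix.smul_apply, smul_eq_mul,
      Fin.sum_univ_four, Fin.sum_univ_seven]
    try simp only [hA10, hA20, hA21, hA30, hA31, hA32, hB10, hB20, hB21, hB30, hB31, hB32,
      hC10, hC20, hC21, hC30, hC31, hC32, hA0, hB0, hC0]
    try ring
end
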